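/- Let ι: Γ → Γ' be a specialization of weighted graphs (edge contraction) and P a cyclic subgraph of Γ. Then ι_*(E_P, D_P) = (E_{ι_*(P)}, D_{ι_*(P)}), i.e., pushforward of the polystable pseudo-root associated to P is the polystable pseudo-root associated to the image cyclic subgraph ι_*(P). -/

import Mathlib

/-! A common framework for weighted multigraphs, divisors, flows,
subdivisions, pseudo-divisors and specializations, following
"The moduli space of quasistable spin curves". -/

noncomputable section

/-- A finite weighted multigraph (with a reference orientation of each edge). -/
structure WGraph where
  V : Type
  E : Type
  [fintV : Fintype V]
  [decV : DecidableEq V]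
  [fintE : Fintype E]
  [decE : DecidableEq E]
  src : E → V
  tgt : E → V
  w : V → ℕ

namespace WGraph

attribute [instance] WGraph.fintV WGraph.decV WGraph.fintE WGraph.decE

attribute [local instance] Classical.propDecidable

variable (G : WGraph)

/-- Degree of a vertex (loops count twice). -/
def deg (v : G.V) : ℕ :=
  (Finset.univ.filter (fun e => G.src e = v)).card +
    (Finset.univ.filter (fun e => G.tgt e = v)).card

/-- Degree of a vertex in the edge set `A` (loops count twice). -/
def degIn (A : Finset G.E) (v : G.V) : ℕ :=
  (A.filter (fun e => G.src e = v)).card + (A.filter (fun e => G.tgt e = v)).card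

/-- Canonical divisor: `K(v) = 2 w(v) - 2 + deg(v)`. -/
def K (v : G.V) : ℤ := 2 * (G.w v : ℤ) - 2 + (G.deg v : ℤ)

/-- Canonical polarization of degree `g - 1`. -/
def canPol (v : G.V) : ℚ := (G.K v : ℚ) / 2

/-- Oriented edges: `(e, true)` is `src → tgt`, `(e, false)` is the reverse. -/
abbrev OEdge := G.E × Bool

def osrc (oe : G.OEdge) : G.V := if oe.2 then G.src oe.1 else G.tgt oe.1

def otgt (oe : G.OEdge) : G.V := if oe.2 then G.tgt oe.1 else G.src oe.1

/-- A flow is recorded by its values along the reference orientation;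
`flowVal` gives its value on an oriented edge. -/
def flowVal (φ : G.E → ℤ) (oe : G.OEdge) : ℤ := if oe.2 then φ oe.1 else -φ oe.1

/-- The divisor of a flow: `Div(φ)(v) = ∑_{t(e) = v} φ(e)` over oriented edges. -/
def divOf (φ : G.E → ℤ) (v : G.V) : ℤ :=
  (∑ e : G.E, if G.tgt e = v then φ e else 0) -
    ∑ e : G.E, if G.src e = v then φ e else 0

/-- `e` has exactly one endpoint in `W`. -/
def crossing (W : Finset G.V) (e : G.E) : Prop := (G.src e ∈ W) ≠ (G.tgt e ∈ W)

/-- Number of edges between `W` and its complement. -/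
def delta (W : Finset G.V) : ℕ := (Finset.univ.filter (fun e => G.crossing W e)).card

/-- `β_D(W) = deg(D|_W) - μ(W) + δ_W / 2`. -/
def beta (μ : G.V → ℚ) (D : G.V → ℤ) (W : Finset G.V) : ℚ :=
  (∑ v ∈ W, (D v : ℚ)) - (∑ v ∈ W, μ v) + (G.delta W : ℚ) / 2

def Semistable (μ : G.V → ℚ) (D : G.V → ℤ) : Prop :=
  ∀ W : Finset G.V, W ≠ Finset.univ → 0 ≤ G.beta μ D W

def Stable (μ : G.V → ℚ) (D : G.V → ℤ) : Prop :=
  ∀ W : Finset G.V, W ≠ Finset.univ → W.Nonempty → 0 < G.beta μ D W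

def Quasistable (μ : G.V → ℚ) (v₀ : G.V) (D : G.V → ℤ) : Prop :=
  ∀ W : Finset G.V, W ≠ Finset.univ →
    (0 ≤ G.beta μ D W ∧ (v₀ ∈ W → 0 < G.beta μ D W))

/-- An oriented cycle: a nonempty cyclically closed chain of oriented edges,
with pairwise distinct underlying edges and pairwise distinct vertices. -/
def IsOrientedCycle (c : List G.OEdge) : Prop :=
  c ≠ [] ∧ (c.map Prod.fst).Nodup ∧ (c.map G.osrc).Nodup ∧
    ∀ i : Fin c.length,
      G.otgt (c.get i) = G.osrc (c.get ⟨((i : ℕ) + 1) % c.length, Nat.mod_lt _ i.pos⟩)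

/-- A flow is acyclic if there is no oriented cycle on which it is
nonnegative and somewhere positive. -/
def Acyclic (φ : G.E → ℤ) : Prop :=
  ¬∃ c : List G.OEdge, G.IsOrientedCycle c ∧ (∀ oe ∈ c, 0 ≤ G.flowVal φ oe) ∧
      ∃ oe ∈ c, 0 < G.flowVal φ oe

/-- Adjacency through an edge of `A`. -/
def adjVia (A : Finset G.E) (a b : G.V) : Prop :=
  ∃ e ∈ A, (G.src e = a ∧ G.tgt e = b) ∨ (G.src e = b ∧ G.tgt e = a)

/-- Reachability using only edges of `A`. -/
def ReachVia (A : Finset G.E) : G.V → G.V → Prop := Relation.ReflTransGen (G.adjVia A)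

def Connected : Prop := Nonempty G.V ∧ ∀ u v : G.V, G.ReachVia Finset.univ u v

/-- A cyclic subgraph: a set of edges in which every vertex has even degree. -/
def IsCyclicSubgraph (P : Finset G.E) : Prop := ∀ v : G.V, Even (G.degIn P v)

/-- The characteristic flow of a vertex. -/
def charFlow (v₀ : G.V) (e : G.E) : ℤ :=
  if G.src e = v₀ ∧ G.tgt e ≠ v₀ then 1
  else if G.tgt e = v₀ ∧ G.src e ≠ v₀ then -1 else 0

/-- `Div(v₀)`, the principal divisor attached to a vertex. -/
def DivV (v₀ : G.V) : G.V → ℤ := G.divOf (G.charFlow v₀)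

/-- Principal divisors are integer combinations of the `Div(v)`. -/
def Principal (D : G.V → ℤ) : Prop :=
  ∃ a : G.V → ℤ, ∀ v, D v = ∑ u : G.V, a u * G.DivV u v

/-- Number of connected components of the subgraph with all vertices and
edge set `A`. -/
def numComponents (A : Finset G.E) : ℕ :=
  (Finset.univ.image (fun v => Finset.univ.filter (fun u => G.ReachVia A v u))).card

/-- The subdivision `Γ^S`: one exceptional vertex inserted in each edge of `S`. -/
def subdiv (S : Finset G.E) : WGraph where
  V := G.V ⊕ {e // e ∈ S}
  E := {e // e ∉ S} ⊕ {e // e ∈ S} × Bool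
  src := fun x =>
    match x with
    | .inl e => .inl (G.src e.1)
    | .inr (e, b) => if b then .inr e else .inl (G.src e.1)
  tgt := fun x =>
    match x with
    | .inl e => .inl (G.tgt e.1)
    | .inr (e, b) => if b then .inl (G.tgt e.1) else .inr e
  w := fun v =>
    match v with
    | .inl v => G.w v
    | .inr _ => 0

/-- A pseudo-divisor: value `-1` on every exceptional vertex. -/
def IsPseudoDivisor (S : Finset G.E) (D : (G.subdiv S).V → ℤ) : Prop :=
  ∀ x : {e // e ∈ S}, D (Sum.inr x) = -1

/-- A pseudo-root: `2 D + Div(φ) = K_{Γ^S}` for some acyclic flow `φ` on `Γ^S`. -/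
def IsPseudoRoot (S : Finset G.E) (D : (G.subdiv S).V → ℤ) : Prop :=
  G.IsPseudoDivisor S D ∧
    ∃ φ : (G.subdiv S).E → ℤ, (G.subdiv S).Acyclic φ ∧
      ∀ v, 2 * D v + (G.subdiv S).divOf φ v = (G.subdiv S).K v

/-- Semistability of a pseudo-divisor: semistability on the subdivision with
respect to the (extended) canonical polarization. -/
def IsSemistablePR (S : Finset G.E) (D : (G.subdiv S).V → ℤ) : Prop :=
  (G.subdiv S).Semistable (G.subdiv S).canPol D

/-- `β_{E,D}` for pseudo-divisors, on subsets of the original vertices. -/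
def betaPoly (S : Finset G.E) (D : (G.subdiv S).V → ℤ) (W : Finset G.V) : ℚ :=
  (∑ v ∈ W, (D (Sum.inl v) : ℚ)) -
    (∑ v ∈ W, (G.canPol v + (G.degIn S v : ℚ) / 2)) +
    ((Finset.univ.filter (fun e => e ∉ S ∧ G.crossing W e)).card : ℚ) / 2

/-- Polystability of a pseudo-divisor. -/
def IsPolystable (S : Finset G.E) (D : (G.subdiv S).V → ℤ) : Prop :=
  ∀ W : Finset G.V,
    0 ≤ G.betaPoly S D W ∧ ((∃ e, e ∉ S ∧ G.crossing W e) → 0 < G.betaPoly S D W)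

/-- The divisor `D_P` attached to a cyclic subgraph `P`, on `Γ^{E_P}` with
`E_P = Pᶜ`. -/
def DP (P : Finset G.E) : (G.subdiv Pᶜ).V → ℤ := fun x =>
  match x with
  | .inl v => (G.deg v : ℤ) - (G.degIn P v : ℤ) / 2 - 1 + (G.w v : ℤ)
  | .inr _ => -1

/-- The data of a semistable root-graph together with its acyclic flow. -/
def IsSemistableRootTriple (S : Finset G.E) (D : (G.subdiv S).V → ℤ)
    (φ : (G.subdiv S).E → ℤ) : Prop :=
  G.IsPseudoDivisor S D ∧ G.IsSemistablePR S D ∧ (G.subdiv S).Acyclic φ ∧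
    ∀ v, 2 * D v + (G.subdiv S).divOf φ v = (G.subdiv S).K v

/-- The induced subgraph on a vertex set `W`. -/
def induce (W : Finset G.V) : WGraph where
  V := {v // v ∈ W}
  E := {e // G.src e ∈ W ∧ G.tgt e ∈ W}
  src := fun e => ⟨G.src e.1, e.2.1⟩
  tgt := fun e => ⟨G.tgt e.1, e.2.2⟩
  w := fun v => G.w v.1

/-- Number of edges between `W` and `Wᶜ` incident to `v`. -/
def degCross (W : Finset G.V) (v : G.V) : ℕ :=
  (Finset.univ.filter (fun e => G.src e = v ∧ G.crossing W e)).card +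
    (Finset.univ.filter (fun e => G.tgt e = v ∧ G.crossing W e)).card

/-- A specialization (iterated edge contraction) of weighted graphs. -/
structure Spec (G G' : WGraph) where
  vmap : G.V → G'.V
  emap : G'.E → G.E
  emap_inj : Function.Injective emap
  vmap_surj : Function.Surjective vmap
  src_comm : ∀ e', vmap (G.src (emap e')) = G'.src e'
  tgt_comm : ∀ e', vmap (G.tgt (emap e')) = G'.tgt e'
  contract_eq : ∀ e : G.E, e ∉ Finset.univ.image emap → vmap (G.src e) = vmap (G.tgt e)
  fiber_conn : ∀ u v : G.V, vmap u = vmap v →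
    Relation.ReflTransGen
      (fun a b => ∃ e, e ∉ Finset.univ.image emap ∧
        ((G.src e = a ∧ G.tgt e = b) ∨ (G.src e = b ∧ G.tgt e = a))) u v
  weight_eq : ∀ v' : G'.V,
    (G'.w v' : ℤ) =
      (∑ v ∈ Finset.univ.filter (fun v => vmap v = v'), (G.w v : ℤ)) +
        ((Finset.univ.filter (fun e : G.E =>
            e ∉ Finset.univ.image emap ∧ vmap (G.src e) = v')).card : ℤ) -
        ((Finset.univ.filter (fun v : G.V => vmap v = v')).card : ℤ) + 1

/-- Pushforward of a divisor along a specialization. -/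
def Spec.pushDiv {G G' : WGraph} (σ : Spec G G') (D : G.V → ℤ) : G'.V → ℤ :=
  fun v' => ∑ v ∈ Finset.univ.filter (fun v => σ.vmap v = v'), D v

/-- Pushforward of a polarization along a specialization. -/
def Spec.pushPol {G G' : WGraph} (σ : Spec G G') (μ : G.V → ℚ) : G'.V → ℚ :=
  fun v' => ∑ v ∈ Finset.univ.filter (fun v => σ.vmap v = v'), μ v

/-- The induced map on vertices of subdivisions. -/
def Spec.subdivVmap {G G' : WGraph} (σ : Spec G G') (S : Finset G.E)
    (S' : Finset G'.E) : (G.subdiv S).V → (G'.subdiv S').V := fun x =>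
  match x with
  | .inl v => .inl (σ.vmap v)
  | .inr e =>
    if h : ∃ e' : {e' // e' ∈ S'}, σ.emap e'.1 = e.1 then .inr h.choose
    else .inl (σ.vmap (G.src e.1))

/-- Pushforward of a pseudo-divisor (its divisor part) along a specialization. -/
def Spec.pushSubdivDiv {G G' : WGraph} (σ : Spec G G') (S : Finset G.E)
    (S' : Finset G'.E) (D : (G.subdiv S).V → ℤ) : (G'.subdiv S').V → ℤ := fun y =>
  ∑ x ∈ Finset.univ.filter (fun x => σ.subdivVmap S S' x = y), D x

/-- Extension by zero along the edge injection of a specialization. -/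
def Spec.extendBy {G G' : WGraph} (σ : Spec G G') (x : G'.E → ℝ) : G.E → ℝ :=
  fun e => if h : ∃ e', σ.emap e' = e then x h.choose else 0

/-- Same-graph contraction of subdivisions (for `S ⊆ S'`): the vertex map.
`σb e` selects the endpoint to which the exceptional vertex of a contracted
edge `e ∈ S' \ S` is merged (`true` = target, `false` = source). -/
def contrVmap (S S' : Finset G.E) (σb : G.E → Bool) :
    (G.subdiv S').V → (G.subdiv S).V := fun x =>
  match x with
  | .inl v => .inl v
  | .inr e =>
    if h : e.1 ∈ S then .inr ⟨e.1, h⟩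
    else .inl (if σb e.1 then G.tgt e.1 else G.src e.1)

/-- Same-graph contraction of subdivisions: the edge injection. -/
def contrEmap (S S' : Finset G.E) (hSS : S ⊆ S') (σb : G.E → Bool) :
    (G.subdiv S).E → (G.subdiv S').E := fun x =>
  match x with
  | .inl e =>
    if h : e.1 ∈ S' then .inr (⟨e.1, h⟩, !σb e.1) else .inl ⟨e.1, h⟩
  | .inr eb => .inr (⟨eb.1.1, hSS eb.1.2⟩, eb.2)

/-- Specialization of pseudo-divisors over a fixed graph. -/
def PDSpec (S' : Finset G.E) (D' : (G.subdiv S').V → ℤ) (S : Finset G.E)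
    (D : (G.subdiv S).V → ℤ) : Prop :=
  S ⊆ S' ∧ ∃ σb : G.E → Bool,
    ∀ v, D v = ∑ x ∈ Finset.univ.filter (fun x => G.contrVmap S S' σb x = v), D' x

/-- Specialization of semistable root-graphs over a fixed graph: a
specialization of pseudo-divisors pushing the acyclic flow forward. -/
def RootSpec (S' : Finset G.E) (D' : (G.subdiv S').V → ℤ) (S : Finset G.E)
    (D : (G.subdiv S).V → ℤ) : Prop :=
  ∃ hSS : S ⊆ S', ∃ σb : G.E → Bool,
    (∀ v, D v = ∑ x ∈ Finset.univ.filter (fun x => G.contrVmap S S' σb x = v), D' x) ∧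
    ∀ φ' φ : _, (G.subdiv S').Acyclic φ' →
      (∀ v, 2 * D' v + (G.subdiv S').divOf φ' v = (G.subdiv S').K v) →
      (G.subdiv S).Acyclic φ →
      (∀ v, 2 * D v + (G.subdiv S).divOf φ v = (G.subdiv S).K v) →
      ∀ x, φ x = φ' (G.contrEmap S S' hSS σb x)

/-- Underlying edge of `Γ` of an edge of `Γ^S`. -/
def underE (S : Finset G.E) : (G.subdiv S).E → G.E := fun x =>
  match x with
  | .inl e => e.1
  | .inr eb => eb.1.1

/-- A specialization of triples `(Γ, E, D) ≥ (Γ', E', D')`. -/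
structure TripleSpec (G : WGraph) (S : Finset G.E) (D : (G.subdiv S).V → ℤ)
    (G' : WGraph) (S' : Finset G'.E) (D' : (G'.subdiv S').V → ℤ) where
  base : Spec G G'
  sub : Spec (G.subdiv S) (G'.subdiv S')
  vcomm : ∀ v : G.V, sub.vmap (Sum.inl v) = Sum.inl (base.vmap v)
  ecomm : ∀ x : (G'.subdiv S').E, G.underE S (sub.emap x) = base.emap (G'.underE S' x)
  edges_sub : ∀ e' ∈ S', base.emap e' ∈ S
  push_eq : ∀ y, D' y = ∑ x ∈ Finset.univ.filter (fun x => sub.vmap x = y), D x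

/-- A triple specialization is a specialization of root-graphs when it pushes
the (unique) acyclic flows forward. -/
def TripleSpec.IsRootSpec {G : WGraph} {S : Finset G.E} {D : (G.subdiv S).V → ℤ}
    {G' : WGraph} {S' : Finset G'.E} {D' : (G'.subdiv S').V → ℤ}
    (T : TripleSpec G S D G' S' D') : Prop :=
  ∀ φ φ', (G.subdiv S).Acyclic φ →
    (∀ v, 2 * D v + (G.subdiv S).divOf φ v = (G.subdiv S).K v) →
    (G'.subdiv S').Acyclic φ' →
    (∀ v, 2 * D' v + (G'.subdiv S').divOf φ' v = (G'.subdiv S').K v) →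
    ∀ x, φ' x = φ (T.sub.emap x)

/-- The cone `λ` attached to a flow: nonnegative orthant cut by the cycle
equations. -/
def lambdaSet (φ : G.E → ℤ) : Set (G.E → ℝ) :=
  {x | (∀ e, 0 ≤ x e) ∧ ∀ c : List G.OEdge, G.IsOrientedCycle c →
      ((c.map (fun oe => (G.flowVal φ oe : ℝ) * x oe.1)).sum) = 0}

/-- Its relative interior (intersection with the positive orthant). -/
def lambdaInt (φ : G.E → ℤ) : Set (G.E → ℝ) :=
  {x | (∀ e, 0 < x e) ∧ ∀ c : List G.OEdge, G.IsOrientedCycle c →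
      ((c.map (fun oe => (G.flowVal φ oe : ℝ) * x oe.1)).sum) = 0}

/-- Faces of a cone (supporting-hyperplane definition). -/
def IsFaceOf (F C : Set (G.E → ℝ)) : Prop :=
  F = C ∨ ∃ l : (G.E → ℝ) →ₗ[ℝ] ℝ, (∀ x ∈ C, 0 ≤ l x) ∧ F = C ∩ {x | l x = 0}

/-- Facets: faces of codimension one. -/
def IsFacetOf (F C : Set (G.E → ℝ)) : Prop :=
  G.IsFaceOf F C ∧
    Module.finrank ℝ (Submodule.span ℝ F) + 1 = Module.finrank ℝ (Submodule.span ℝ C)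

/-- The vector `u_V` spanning the subspace `L_E`. -/
def uVec (S : Finset G.E) (W : Finset G.V) : (G.subdiv S).E → ℝ := fun x =>
  match x with
  | .inl _ => 0
  | .inr eb =>
    if G.crossing W eb.1.1 then
      (if (if eb.2 then G.tgt eb.1.1 else G.src eb.1.1) ∈ W then 1 else -1)
    else 0

/-- The subspace `L_E ⊆ ℝ^{E(Γ^S)}`. -/
def LSub (S : Finset G.E) : Submodule ℝ ((G.subdiv S).E → ℝ) :=
  Submodule.span ℝ {u | ∃ W : Finset G.V, (∀ e, G.crossing W e → e ∈ S) ∧ u = G.uVec S W}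

/-- The diagonal map `δ_E : ℝ^{E(Γ)} → ℝ^{E(Γ^S)}`. -/
def deltaMap (S : Finset G.E) (x : G.E → ℝ) : (G.subdiv S).E → ℝ := fun e' =>
  match e' with
  | .inl e => x e.1
  | .inr eb => x eb.1.1

/-- One step of a `φ`-path avoiding the edges of `A`. -/
def phiStep (φ : G.E → ℤ) (A : Finset G.E) (a b : G.V) : Prop :=
  ∃ oe : G.OEdge, oe.1 ∉ A ∧ 0 ≤ G.flowVal φ oe ∧ G.osrc oe = a ∧ G.otgt oe = b

/-- Reachability by `φ`-paths avoiding the edges of `A`. -/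
def PhiReach (φ : G.E → ℤ) (A : Finset G.E) : G.V → G.V → Prop :=
  Relation.ReflTransGen (G.phiStep φ A)

/-- The refinement of `Γ` inserting `m e` vertices in the interior of each
edge `e`. -/
def refine (m : G.E → ℕ) : WGraph where
  V := G.V ⊕ (Σ e : G.E, Fin (m e))
  E := Σ e : G.E, Fin (m e + 1)
  src := fun x =>
    if h : (x.2 : ℕ) = 0 then .inl (G.src x.1)
    else .inr ⟨x.1, ⟨(x.2 : ℕ) - 1, by have := x.2.isLt; omega⟩⟩
  tgt := fun x =>
    if h : (x.2 : ℕ) = m x.1 then .inl (G.tgt x.1)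
    else .inr ⟨x.1, ⟨(x.2 : ℕ), by have := x.2.isLt; omega⟩⟩
  w := fun v =>
    match v with
    | .inl v => G.w v
    | .inr _ => 0

end WGraph

attribute [local instance] Classical.propDecidable

/-- Grouping edge-endpoint counts along a specialization. -/
lemma spec_card_push (G G' : WGraph) (σ : WGraph.Spec G G') (A : Finset G.E) (v' : G'.V)
    (g : G.E → G.V) (g' : G'.E → G'.V)
    (hcomm : ∀ e', σ.vmap (g (σ.emap e')) = g' e') :
    ∑ v ∈ Finset.univ.filter (fun v => σ.vmap v = v'), (A.filter (fun e => g e = v)).card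
      = ((Finset.univ.filter (fun e' : G'.E => σ.emap e' ∈ A)).filter
          (fun e' => g' e' = v')).card
        + (A.filter (fun e => e ∉ Finset.univ.image σ.emap ∧ σ.vmap (g e) = v')).card := by
  have step1 : (A.filter (fun e => σ.vmap (g e) = v')).card
      = ∑ v ∈ Finset.univ.filter (fun v => σ.vmap v = v'),
          (A.filter (fun e => g e = v)).card := by
    rw [Finset.card_eq_sum_card_fiberwise (f := g)
      (t := Finset.univ.filter (fun v => σ.vmap v = v'))
      (fun e he => by
        simp only [Finset.mem_coe, Finset.mem_filter, Finset.mem_univ, true_and] at he ⊢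
        exact he.2)]
    apply Finset.sum_congr rfl
    intro v hv
    simp only [Finset.mem_filter, Finset.mem_univ, true_and] at hv
    rw [Finset.filter_filter]
    congr 1
    apply Finset.filter_congr
    intro e _
    constructor
    · rintro ⟨_, h⟩; exact h
    · intro h; exact ⟨by rw [h, hv], h⟩
  have step2 := Finset.card_filter_add_card_filter_not
    (s := A.filter (fun e => σ.vmap (g e) = v'))
    (p := fun e => e ∈ Finset.univ.image σ.emap)
  rw [Finset.filter_filter, Finset.filter_filter] at step2
  have step3 : ((Finset.univ.filter (fun e' : G'.E => σ.emap e' ∈ A)).filter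
        (fun e' => g' e' = v')).card
      = (A.filter (fun e => σ.vmap (g e) = v' ∧ e ∈ Finset.univ.image σ.emap)).card := by
    apply Finset.card_bij (fun e' _ => σ.emap e')
    · intro e' he'
      simp only [Finset.mem_filter, Finset.mem_univ, true_and] at he' ⊢
      exact ⟨he'.1, by rw [hcomm]; exact he'.2,
        Finset.mem_image.mpr ⟨e', Finset.mem_univ _, rfl⟩⟩
    · intro a₁ _ a₂ _ h
      exact σ.emap_inj h
    · intro e he
      simp only [Finset.mem_filter, Finset.mem_univ, true_and] at he
      obtain ⟨e₀, -, rfl⟩ := Finset.mem_image.mp he.2.2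
      refine ⟨e₀, ?_, rfl⟩
      simp only [Finset.mem_filter, Finset.mem_univ, true_and]
      exact ⟨he.1, by rw [← hcomm]; exact he.2.1⟩
  have step4 : (A.filter (fun e => σ.vmap (g e) = v' ∧ e ∉ Finset.univ.image σ.emap))
      = A.filter (fun e => e ∉ Finset.univ.image σ.emap ∧ σ.vmap (g e) = v') := by
    apply Finset.filter_congr
    intro e _
    exact ⟨fun h => ⟨h.2, h.1⟩, fun h => ⟨h.2, h.1⟩⟩
  rw [step4] at step2
  omega

/-- Pushing forward the local degree within an edge set `A`. -/
lemma spec_degIn_push (G G' : WGraph) (σ : WGraph.Spec G G') (A : Finset G.E) (v' : G'.V) :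
    ∑ v ∈ Finset.univ.filter (fun v => σ.vmap v = v'), G.degIn A v
      = G'.degIn (Finset.univ.filter (fun e' : G'.E => σ.emap e' ∈ A)) v'
        + 2 * (A.filter (fun e => e ∉ Finset.univ.image σ.emap ∧
            σ.vmap (G.src e) = v')).card := by
  have hs := spec_card_push G G' σ A v' G.src G'.src σ.src_comm
  have ht := spec_card_push G G' σ A v' G.tgt G'.tgt σ.tgt_comm
  have hco : A.filter (fun e => e ∉ Finset.univ.image σ.emap ∧ σ.vmap (G.tgt e) = v')
      = A.filter (fun e => e ∉ Finset.univ.image σ.emap ∧ σ.vmap (G.src e) = v') := by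
    apply Finset.filter_congr
    intro e _
    constructor
    · rintro ⟨h1, h2⟩; exact ⟨h1, by rw [σ.contract_eq e h1]; exact h2⟩
    · rintro ⟨h1, h2⟩; exact ⟨h1, by rw [← σ.contract_eq e h1]; exact h2⟩
  rw [hco] at ht
  unfold WGraph.degIn
  rw [Finset.sum_add_distrib]
  omega


/-- Pushforward along a specialization `ι : Γ → Γ'` of the
polystable pseudo-root attached to a cyclic subgraph `P` is the polystable
pseudo-root attached to `ι_*(P)`. -/
theorem stmt8 (G G' : WGraph) (σ : WGraph.Spec G G') (P : Finset G.E)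
    (hcyc : G.IsCyclicSubgraph P) :
    ((Finset.univ.filter (fun e' : G'.E => σ.emap e' ∈ P))ᶜ =
      Finset.univ.filter (fun e' : G'.E => σ.emap e' ∈ Pᶜ)) ∧
    (∀ y, σ.pushSubdivDiv Pᶜ
        (Finset.univ.filter (fun e' : G'.E => σ.emap e' ∈ P))ᶜ (G.DP P) y =
      G'.DP (Finset.univ.filter (fun e' : G'.E => σ.emap e' ∈ P)) y) := by
  refine ⟨by ext e'; simp, ?_⟩
  intro y
  have hmemS' : ∀ e' : G'.E, e' ∈ (Finset.univ.filter (fun e' : G'.E => σ.emap e' ∈ P))ᶜ ↔ σ.emap e' ∈ Pᶜ := by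
    intro e'; simp
  have hinr : ∀ (e : {e // e ∈ Pᶜ}) (x' : {e' // e' ∈ (Finset.univ.filter (fun e' : G'.E => σ.emap e' ∈ P))ᶜ}),
      σ.subdivVmap Pᶜ (Finset.univ.filter (fun e' : G'.E => σ.emap e' ∈ P))ᶜ (Sum.inr e) = Sum.inr x' ↔ e.1 = σ.emap x'.1 := by
    intro e x'
    simp only [WGraph.Spec.subdivVmap]
    by_cases h : ∃ e' : {e' // e' ∈ (Finset.univ.filter (fun e' : G'.E => σ.emap e' ∈ P))ᶜ}, σ.emap e'.1 = e.1
    · erw [dif_pos h]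
      have hc := h.choose_spec
      constructor
      · intro heq
        have hx : h.choose = x' := by injection heq with h3
        rw [← hx, hc]
      · intro heq
        have hx : h.choose = x' := by
          apply Subtype.ext
          apply σ.emap_inj
          rw [hc, heq]
        rw [hx]
    · erw [dif_neg h]
      constructor
      · intro heq; injection heq
      · intro heq; exact absurd ⟨x', heq.symm⟩ h
  have hinl : ∀ (e : {e // e ∈ Pᶜ}) (v' : G'.V),
      σ.subdivVmap Pᶜ (Finset.univ.filter (fun e' : G'.E => σ.emap e' ∈ P))ᶜ (Sum.inr e) = Sum.inl v' ↔
        (e.1 ∉ Finset.univ.image σ.emap ∧ σ.vmap (G.src e.1) = v') := by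
    intro e v'
    simp only [WGraph.Spec.subdivVmap]
    by_cases h : ∃ e' : {e' // e' ∈ (Finset.univ.filter (fun e' : G'.E => σ.emap e' ∈ P))ᶜ}, σ.emap e'.1 = e.1
    · erw [dif_pos h]
      obtain ⟨e₀, he₀⟩ := h
      constructor
      · intro heq; injection heq
      · rintro ⟨h1, -⟩
        exact absurd (Finset.mem_image.mpr ⟨e₀.1, Finset.mem_univ _, he₀⟩) h1
    · erw [dif_neg h]
      constructor
      · intro heq
        refine ⟨?_, by injection heq⟩
        intro hmem
        obtain ⟨e₀, -, he₀⟩ := Finset.mem_image.mp hmem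
        refine h ⟨⟨e₀, ?_⟩, he₀⟩
        rw [hmemS', he₀]
        exact e.2
      · rintro ⟨-, h2⟩; rw [h2]
  obtain v' | x' := y
  case inr =>
    have hx : σ.emap x'.1 ∈ Pᶜ := (hmemS' x'.1).mp x'.2
    unfold WGraph.Spec.pushSubdivDiv
    have hfib : (Finset.univ.filter
          (fun x => σ.subdivVmap Pᶜ (Finset.univ.filter (fun e' : G'.E => σ.emap e' ∈ P))ᶜ x = Sum.inr x'))
        = {Sum.inr ⟨σ.emap x'.1, hx⟩} := by
      ext z
      simp only [Finset.mem_filter, Finset.mem_univ, true_and, Finset.mem_singleton]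
      constructor
      · intro hz
        cases z with
        | inl v =>
          simp only [WGraph.Spec.subdivVmap] at hz
          injection hz
        | inr e => exact Finset.mem_singleton.mpr (congrArg Sum.inr (Subtype.ext ((hinr e x').mp hz) : e = ⟨σ.emap x'.1, hx⟩))
      · intro hz
        rw [Finset.mem_singleton.mp hz]
        exact (hinr _ x').mpr rfl
    refine (Finset.sum_congr (s₂ := {Sum.inr ⟨σ.emap x'.1, hx⟩}) ((Finset.filter_congr_decidable _ _ _).trans hfib) (fun _ _ => rfl)).trans ?_
    erw [Finset.sum_singleton]
    rfl
  case inl =>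
    unfold WGraph.Spec.pushSubdivDiv
    rw [Finset.sum_filter]
    refine Eq.trans (b := (∑ x : G.V ⊕ {e // e ∈ Pᶜ},
        if σ.subdivVmap Pᶜ (Finset.univ.filter (fun e' : G'.E => σ.emap e' ∈ P))ᶜ x = Sum.inl v' then G.DP P x else 0)) (Finset.sum_congr rfl fun x _ => by split_ifs <;> rfl) ?_
    rw [Fintype.sum_sum_type]
    have hA : (∑ v : G.V,
          if σ.subdivVmap Pᶜ (Finset.univ.filter (fun e' : G'.E => σ.emap e' ∈ P))ᶜ (Sum.inl v) = Sum.inl v' then G.DP P (Sum.inl v) else 0)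
        = ∑ v ∈ Finset.univ.filter (fun v => σ.vmap v = v'),
            ((G.deg v : ℤ) - (G.degIn P v : ℤ) / 2 - 1 + (G.w v : ℤ)) := by
      rw [Finset.sum_filter]
      apply Finset.sum_congr rfl
      intro v _
      by_cases h : σ.vmap v = v'
      · rw [if_pos (by simp [WGraph.Spec.subdivVmap, h]; rfl), if_pos h]
        rfl
      · rw [if_neg ?_, if_neg h]
        intro hc
        simp only [WGraph.Spec.subdivVmap] at hc
        injection hc with h2
        exact h h2
    have hB : (∑ e : {e // e ∈ Pᶜ},
          if σ.subdivVmap Pᶜ (Finset.univ.filter (fun e' : G'.E => σ.emap e' ∈ P))ᶜ (Sum.inr e) = Sum.inl v' then G.DP P (Sum.inr e) else 0)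
        = -((Pᶜ.filter (fun e => e ∉ Finset.univ.image σ.emap ∧ σ.vmap (G.src e) = v')).card : ℤ) := by
      have hterm : ∀ e : {e // e ∈ Pᶜ},
          (if σ.subdivVmap Pᶜ (Finset.univ.filter (fun e' : G'.E => σ.emap e' ∈ P))ᶜ (Sum.inr e) = Sum.inl v' then G.DP P (Sum.inr e) else 0)
            = (if e.1 ∉ Finset.univ.image σ.emap ∧ σ.vmap (G.src e.1) = v'
                then (-1 : ℤ) else 0) := by
        intro e
        by_cases h : e.1 ∉ Finset.univ.image σ.emap ∧ σ.vmap (G.src e.1) = v'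
        · rw [if_pos h, if_pos ((hinl e v').mpr h)]
          rfl
        · rw [if_neg h, if_neg (fun hc => h ((hinl e v').mp hc))]
      rw [Finset.sum_congr rfl (fun e _ => hterm e),
        ← Finset.sum_subtype Pᶜ (fun x => Iff.rfl)
          (fun e => if e ∉ Finset.univ.image σ.emap ∧ σ.vmap (G.src e) = v'
            then (-1 : ℤ) else 0),
        ← Finset.sum_filter]
      simp
    rw [hA, hB]
    have hdegI := spec_degIn_push G G' σ P v'
    have hdegA := spec_degIn_push G G' σ Finset.univ v'
    have hw := σ.weight_eq v'
    have huniv : (Finset.univ.filter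
          (fun e' : G'.E => σ.emap e' ∈ (Finset.univ : Finset G.E))) = Finset.univ := by
      simp
    rw [huniv] at hdegA
    have hsplit : ((Finset.univ : Finset G.E).filter (fun e => e ∉ Finset.univ.image σ.emap ∧ σ.vmap (G.src e) = v')).card
        = (P.filter (fun e => e ∉ Finset.univ.image σ.emap ∧ σ.vmap (G.src e) = v')).card + (Pᶜ.filter (fun e => e ∉ Finset.univ.image σ.emap ∧ σ.vmap (G.src e) = v')).card := by
      have hun : (Finset.univ : Finset G.E).filter (fun e => e ∉ Finset.univ.image σ.emap ∧ σ.vmap (G.src e) = v')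
          = P.filter (fun e => e ∉ Finset.univ.image σ.emap ∧ σ.vmap (G.src e) = v') ∪ Pᶜ.filter (fun e => e ∉ Finset.univ.image σ.emap ∧ σ.vmap (G.src e) = v') := by
        ext e
        by_cases h : e ∈ P <;> simp [h]
      rw [hun, Finset.card_union_of_disjoint
        (Finset.disjoint_filter_filter disjoint_compl_right)]
    have hsum : ∑ v ∈ Finset.univ.filter (fun v => σ.vmap v = v'),
          ((G.deg v : ℤ) - (G.degIn P v : ℤ) / 2 - 1 + (G.w v : ℤ))
        = (∑ v ∈ Finset.univ.filter (fun v => σ.vmap v = v'), (G.deg v : ℤ))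
          - (∑ v ∈ Finset.univ.filter (fun v => σ.vmap v = v'), (G.degIn P v : ℤ) / 2)
          - (((Finset.univ.filter (fun v : G.V => σ.vmap v = v')).card : ℕ) : ℤ)
          + (∑ v ∈ Finset.univ.filter (fun v => σ.vmap v = v'), (G.w v : ℤ)) := by
      rw [Finset.sum_add_distrib, Finset.sum_sub_distrib, Finset.sum_sub_distrib,
        Finset.sum_const]
      simp
    have h2div : 2 * (∑ v ∈ Finset.univ.filter (fun v => σ.vmap v = v'),
          (G.degIn P v : ℤ) / 2)
        = ∑ v ∈ Finset.univ.filter (fun v => σ.vmap v = v'), (G.degIn P v : ℤ) := by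
      rw [Finset.mul_sum]
      apply Finset.sum_congr rfl
      intro v _
      obtain ⟨k, hk⟩ := hcyc v
      omega
    have hcastI : ∑ v ∈ Finset.univ.filter (fun v => σ.vmap v = v'), (G.degIn P v : ℤ)
        = ((G'.degIn (Finset.univ.filter (fun e' : G'.E => σ.emap e' ∈ P)) v' : ℕ) : ℤ)
          + 2 * (((P.filter (fun e => e ∉ Finset.univ.image σ.emap ∧ σ.vmap (G.src e) = v')).card : ℕ) : ℤ) := by
      exact_mod_cast congrArg (Nat.cast : ℕ → ℤ) hdegI
    have hcastA : ∑ v ∈ Finset.univ.filter (fun v => σ.vmap v = v'), (G.deg v : ℤ)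
        = ((G'.deg v' : ℕ) : ℤ)
          + 2 * ((((Finset.univ : Finset G.E).filter (fun e => e ∉ Finset.univ.image σ.emap ∧ σ.vmap (G.src e) = v')).card : ℕ) : ℤ) := by
      exact_mod_cast congrArg (Nat.cast : ℕ → ℤ) hdegA
    show _ = (G'.deg v' : ℤ)
        - ((G'.degIn (Finset.univ.filter (fun e' : G'.E => σ.emap e' ∈ P)) v' : ℕ) : ℤ) / 2
        - 1 + (G'.w v' : ℤ)
    rw [hsum]
    omega
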